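/- Let T(x,y) = (x+r, y+s) be a plane translation whose induced torus rotation is ergodic for Lebesgue measure, and let R be an exchange of m pieces D₁,…,D_m adapted to T, with translation vectors 𝐧_i = (n_i, m_i) ∈ ℤ² and piece measures α_i = μ(D_i), whose generated system is measure-equivalent to the induced torus rotation. Then the frequencies of visits determine the translation vector: r = Σ_{i=1}^m n_i α_i and s = Σ_{i=1}^m m_i α_i. -/

import Mathlib

open MeasureTheory Filter Topology

noncomputable section

/-- The inclusion of `ℤ × ℤ` into `ℝ × ℝ`. -/
def latVec (v : ℤ × ℤ) : ℝ × ℝ := ((v.1 : ℝ), (v.2 : ℝ))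

/-- An exchange of `m` pieces of the plane adapted to a measurable map `T` of the plane:
measurable pieces `D i`, pairwise almost disjoint, whose union has Lebesgue measure 1 and is
almost surely a fundamental domain for `ℤ²`, together with integer vectors `vec i` and the
exchange map `R` acting on the union of the pieces by `R x = T x - vec i` for `x ∈ D i`,
preserving Lebesgue measure.  `C` is the coding map: `C x k` records the piece containing
`R^[k] x`. -/
structure PieceExchange (T : ℝ × ℝ → ℝ × ℝ) (m : ℕ) where
  D : Fin m → Set (ℝ × ℝ)
  vec : Fin m → ℤ × ℤ
  R : ℝ × ℝ → ℝ × ℝ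
  C : ℝ × ℝ → ℕ → Fin m
  measD : ∀ i, MeasurableSet (D i)
  aeDisjoint : ∀ i j, i ≠ j → volume (D i ∩ D j) = 0
  measure_union : volume (⋃ i, D i) = 1
  fundamental :
    volume {x | x ∈ ⋃ i, D i ∧ ∃ y ∈ ⋃ i, D i, y ≠ x ∧ ∃ a b : ℤ, x - y = ((a : ℝ), (b : ℝ))} = 0
  measR : Measurable R
  measC : Measurable C
  mem_code : ∀ x ∈ ⋃ i, D i, ∀ k : ℕ, R^[k] x ∈ D (C x k)
  R_eq : ∀ x ∈ ⋃ i, D i, ∀ k : ℕ, R (R^[k] x) = T (R^[k] x) - latVec (vec (C x k))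
  meas_pres : ∀ A : Set (ℝ × ℝ), MeasurableSet A →
    volume ((⋃ i, D i) ∩ R ⁻¹' A) = volume ((⋃ i, D i) ∩ A)

namespace PieceExchange

variable {T : ℝ × ℝ → ℝ × ℝ} {m : ℕ}

/-- The domain of the exchange: the union of the pieces. -/
def domain (E : PieceExchange T m) : Set (ℝ × ℝ) := ⋃ i, E.D i

/-- The exchange is conjugate to `T` when the coding map is injective off a Lebesgue-null set. -/
def Conjugate (E : PieceExchange T m) : Prop :=
  volume {x | x ∈ E.domain ∧ ∃ y ∈ E.domain, y ≠ x ∧ E.C y = E.C x} = 0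

/-- The language of the exchange: all finite factors of coding sequences. -/
def lang (E : PieceExchange T m) : Set (List (Fin m)) :=
  {w | ∃ n k : ℕ, ∃ x ∈ E.domain, w = (List.range n).map fun j => E.C x (k + j)}

/-- The complexity of the exchange: the number of words of length `n` in its language. -/
def complexity (E : PieceExchange T m) (n : ℕ) : ℕ :=
  Nat.card {w : List (Fin m) // w ∈ E.lang ∧ w.length = n}

end PieceExchange

/-- The complexity function associated to `T`: the infimum of the complexities of the
exchanges of pieces conjugate to `T` (`⊤` if there is no such exchange). -/
def complexityFn (T : ℝ × ℝ → ℝ × ℝ) (n : ℕ) : ℕ∞ :=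
  ⨅ (m : ℕ) (E : PieceExchange T m) (_ : E.Conjugate), (E.complexity n : ℕ∞)


namespace AtkinsonAux

variable {α : Type*} [MeasurableSpace α] {ν : Measure α} {f : α → α}

/-- Birkhoff sums. -/
def bS (f : α → α) (g : α → ℝ) (n : ℕ) (x : α) : ℝ :=
  ∑ j ∈ Finset.range n, g (f^[j] x)

theorem bS_succ (f : α → α) (g : α → ℝ) (n : ℕ) (x : α) :
    bS f g (n + 1) x = bS f g n x + g (f^[n] x) := by
  simp [bS, Finset.sum_range_succ]

theorem bS_succ' (f : α → α) (g : α → ℝ) (n : ℕ) (x : α) :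
    bS f g (n + 1) x = g x + bS f g n (f x) := by
  unfold bS
  rw [Finset.sum_range_succ']
  simp only [Function.iterate_succ_apply, Function.iterate_zero_apply]
  exact add_comm _ _

theorem bS_neg (f : α → α) (g : α → ℝ) (n : ℕ) (x : α) :
    bS f (fun y => -g y) n x = -bS f g n x := by
  simp [bS]

theorem bS_const_sub (f : α → α) (g : α → ℝ) (t : ℝ) (n : ℕ) (x : α) :
    bS f (fun y => t - g y) n x = n * t - bS f g n x := by
  simp [bS, Finset.sum_sub_distrib, mul_comm]

/-- The (recursive form of) the maximal function `max_{1 ≤ k ≤ n+1} S_k g`. -/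
def mA (f : α → α) (g : α → ℝ) : ℕ → α → ℝ
  | 0 => g
  | n + 1 => fun x => g x + max (mA f g n (f x)) 0

theorem measurable_mA (hf : Measurable f) {g : α → ℝ} (hg : Measurable g) (n : ℕ) :
    Measurable (mA f g n) := by
  induction n with
  | zero => exact hg
  | succ n ih => exact hg.add ((ih.comp hf).max measurable_const)

theorem abs_mA_le {g : α → ℝ} {C : ℝ} (hC : ∀ x, |g x| ≤ C) (n : ℕ) (x : α) :
    |mA f g n x| ≤ (n + 1) * C := by
  induction n generalizing x with
  | zero => simpa [mA] using hC x
  | succ n ih =>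
      have h1 : |max (mA f g n (f x)) 0| ≤ (n + 1) * C := by
        rcases le_or_gt (mA f g n (f x)) 0 with h | h
        · rw [max_eq_right h, abs_zero]
          have := (abs_nonneg (g x)).trans (hC x)
          positivity
        · rw [max_eq_left h.le]; exact ih (f x)
      calc |g x + max (mA f g n (f x)) 0| ≤ |g x| + |max (mA f g n (f x)) 0| := abs_add_le _ _
        _ ≤ C + (n + 1) * C := add_le_add (hC x) h1
        _ = (↑(n + 1) + 1) * C := by push_cast; ring

theorem mA_mono (f : α → α) (g : α → ℝ) (n : ℕ) (x : α) :
    mA f g n x ≤ mA f g (n + 1) x := by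
  induction n generalizing x with
  | zero => simpa [mA] using le_max_right (mA f g 0 (f x)) 0
  | succ n ih =>
      show g x + _ ≤ g x + _
      exact add_le_add_right (max_le_max (ih (f x)) le_rfl) _

theorem mA_mono' (f : α → α) (g : α → ℝ) (x : α) : Monotone fun n => mA f g n x :=
  monotone_nat_of_le_succ fun n => mA_mono f g n x

theorem bS_le_mA (f : α → α) (g : α → ℝ) (n : ℕ) (x : α) :
    bS f g (n + 1) x ≤ mA f g n x := by
  induction n generalizing x with
  | zero => simp [bS, mA]
  | succ n ih =>
      rw [bS_succ']
      exact add_le_add_right ((ih (f x)).trans (le_max_left _ _)) _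

theorem integrable_of_bound [IsFiniteMeasure ν] {g : α → ℝ} (hg : Measurable g)
    (C : ℝ) (hC : ∀ x, |g x| ≤ C) : Integrable g ν :=
  (integrable_const C).mono' hg.aestronglyMeasurable
    (ae_of_all _ fun x => by simpa [Real.norm_eq_abs] using hC x)

/-- Garsia's maximal ergodic theorem (the form we need). -/
theorem maximal_erg [IsFiniteMeasure ν] (hf : Measurable f) (hfν : Measure.map f ν = ν)
    {g : α → ℝ} (hg : Measurable g) (C : ℝ) (hC : ∀ x, |g x| ≤ C)
    (hae : ∀ᵐ x ∂ν, ∃ n, 1 ≤ n ∧ 0 < bS f g n x) :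
    0 ≤ ∫ x, g x ∂ν := by
  -- replace the bound by a nonnegative one
  set C' : ℝ := |C| with hC'def
  have hC' : ∀ x, |g x| ≤ C' := fun x => (hC x).trans (le_abs_self C)
  have hC'0 : 0 ≤ C' := abs_nonneg C
  clear hC
  -- basic objects
  set B : ℕ → α → ℝ := fun n x => max (mA f g n x) 0 with hBdef
  have hBmeas : ∀ n, Measurable (B n) := fun n => (measurable_mA hf hg n).max measurable_const
  have hBbound : ∀ n x, |B n x| ≤ (n + 1) * C' := by
    intro n x
    rw [abs_le]
    constructor
    · have : (0:ℝ) ≤ (n + 1) * C' := by positivity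
      exact le_trans (by linarith) (le_max_right _ _)
    · rcases le_or_gt (mA f g n x) 0 with h | h
      · rw [hBdef]; simp only [max_eq_right h]; positivity
      · rw [hBdef]; simp only [max_eq_left h.le]
        exact (le_abs_self _).trans (abs_mA_le hC' n x)
  have hBint : ∀ n, Integrable (B n) ν := fun n =>
    integrable_of_bound (hBmeas n) _ (hBbound n)
  have hBfint : ∀ n, Integrable (fun x => B n (f x)) ν := fun n =>
    integrable_of_bound ((hBmeas n).comp hf) ((n+1) * C') fun x => hBbound n (f x)
  -- composing with f preserves integrals
  have hcomp : ∀ (h : α → ℝ), Measurable h → Integrable h ν →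
      ∫ x, h (f x) ∂ν = ∫ x, h x ∂ν := by
    intro h hh _
    conv_rhs => rw [← hfν]
    rw [integral_map hf.aemeasurable]
    rw [hfν]
    exact hh.aestronglyMeasurable
  -- the sets where the maximal function is positive
  set Epos : ℕ → Set α := fun n => {x | 0 < mA f g n x} with hEdef
  have hEmeas : ∀ n, MeasurableSet (Epos n) :=
    fun n => measurableSet_lt measurable_const (measurable_mA hf hg n)
  -- Garsia's inequality
  have hgarsia : ∀ n x, B n x - B n (f x) ≤ (Epos n).indicator g x := by
    intro n x
    by_cases hx : x ∈ Epos n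
    · rw [Set.indicator_of_mem hx]
      have h1 : mA f g n x ≤ g x + B n (f x) := (mA_mono f g n x).trans (le_of_eq rfl)
      have h2 : B n x = mA f g n x := max_eq_left (le_of_lt hx)
      rw [h2]; linarith [h1]
    · rw [Set.indicator_of_notMem hx]
      have h2 : B n x = 0 := max_eq_right (le_of_not_gt hx)
      rw [h2]
      have : (0:ℝ) ≤ B n (f x) := le_max_right _ _
      linarith
  -- integrate
  have hind_int : ∀ n, Integrable ((Epos n).indicator g) ν := fun n =>
    (integrable_of_bound hg C' hC').indicator (hEmeas n)
  have hnonneg : ∀ n, 0 ≤ ∫ x, (Epos n).indicator g x ∂ν := by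
    intro n
    have h0 : ∫ x, (B n x - B n (f x)) ∂ν = 0 := by
      rw [integral_sub (hBint n) (hBfint n), hcomp (B n) (hBmeas n) (hBint n), sub_self]
    calc (0:ℝ) = ∫ x, (B n x - B n (f x)) ∂ν := h0.symm
      _ ≤ ∫ x, (Epos n).indicator g x ∂ν :=
          integral_mono ((hBint n).sub (hBfint n)) (hind_int n) (hgarsia n)
  -- pass to the limit
  set Einf : Set α := {x | ∃ n, 0 < mA f g n x} with hEinf
  have hEinfmeas : MeasurableSet Einf := by
    have : Einf = ⋃ n, Epos n := by ext x; simp [hEinf, hEdef]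
    rw [this]; exact MeasurableSet.iUnion hEmeas
  have hconv : ∀ x, Tendsto (fun n => (Epos n).indicator g x) atTop
      (𝓝 (Einf.indicator g x)) := by
    intro x
    by_cases hx : x ∈ Einf
    · rw [Set.indicator_of_mem hx]
      obtain ⟨n₀, hn₀⟩ := hx
      apply tendsto_const_nhds.congr'
      filter_upwards [eventually_ge_atTop n₀] with n hn
      have : x ∈ Epos n := lt_of_lt_of_le hn₀ (mA_mono' f g x hn)
      rw [Set.indicator_of_mem this]
    · rw [Set.indicator_of_notMem hx]
      have : ∀ n, (Epos n).indicator g x = 0 := by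
        intro n
        apply Set.indicator_of_notMem
        intro h; exact hx ⟨n, h⟩
      simpa [this] using tendsto_const_nhds
  have hlim : Tendsto (fun n => ∫ x, (Epos n).indicator g x ∂ν) atTop
      (𝓝 (∫ x, Einf.indicator g x ∂ν)) := by
    apply tendsto_integral_of_dominated_convergence (fun _ => C')
    · exact fun n => ((hg.indicator (hEmeas n))).aestronglyMeasurable
    · exact integrable_const C'
    · intro n
      filter_upwards with x
      rw [Real.norm_eq_abs]
      by_cases hx : x ∈ Epos n
      · rw [Set.indicator_of_mem hx]; exact hC' x
      · rw [Set.indicator_of_notMem hx]; simpa using hC'0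
    · exact ae_of_all _ hconv
  have hEint : 0 ≤ ∫ x, Einf.indicator g x ∂ν :=
    ge_of_tendsto' hlim hnonneg
  -- a.e. x is in Einf
  have hfull : ∀ᵐ x ∂ν, g x = Einf.indicator g x := by
    filter_upwards [hae] with x ⟨n, hn1, hn2⟩
    have : x ∈ Einf := by
      obtain ⟨k, rfl⟩ := Nat.exists_eq_add_of_le hn1
      exact ⟨k, lt_of_lt_of_le (by simpa [add_comm] using hn2) (by
        have := bS_le_mA f g k x
        simpa [add_comm] using this)⟩
    rw [Set.indicator_of_mem this]
  calc (0:ℝ) ≤ ∫ x, Einf.indicator g x ∂ν := hEint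
    _ = ∫ x, g x ∂ν := (integral_congr_ae hfull).symm


/-- Atkinson-type lemma: a bounded function whose Birkhoff sums are recurrent has zero mean. -/
theorem atkinson_nonpos [IsProbabilityMeasure ν] (hf : Measurable f)
    (hfν : Measure.map f ν = ν) {g : α → ℝ} (hg : Measurable g) (C : ℝ)
    (hC : ∀ x, |g x| ≤ C)
    (hrec : ∀ᵐ x ∂ν, ∃ M : ℝ, ∀ K : ℕ, ∃ k, K ≤ k ∧ |bS f g k x| ≤ M) :
    ∫ x, g x ∂ν ≤ 0 := by
  have key : ∀ ε : ℝ, 0 < ε → ∫ x, g x ∂ν ≤ ε := by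
    intro ε hε
    have hmeas : Measurable fun y => ε - g y := measurable_const.sub hg
    have hbound : ∀ x, |ε - g x| ≤ |ε| + C := fun x =>
      (abs_sub _ _).trans (add_le_add le_rfl (hC x))
    have hae : ∀ᵐ x ∂ν, ∃ n, 1 ≤ n ∧ 0 < bS f (fun y => ε - g y) n x := by
      filter_upwards [hrec] with x ⟨M, hM⟩
      obtain ⟨K, hK⟩ := exists_nat_gt (M / ε)
      have hKε : M < (K + 1) * ε := by
        have : M / ε < (K:ℝ) + 1 := hK.trans (by linarith)
        calc M = (M / ε) * ε := by field_simp
          _ < ((K:ℝ) + 1) * ε := by exact mul_lt_mul_of_pos_right this hε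
      obtain ⟨k, hk1, hk2⟩ := hM (K + 1)
      refine ⟨k, le_trans (by omega) hk1, ?_⟩
      rw [bS_const_sub]
      have h1 : bS f g k x ≤ M := (le_abs_self _).trans hk2
      have h2 : (K + 1 : ℝ) * ε ≤ (k:ℝ) * ε := by
        apply mul_le_mul_of_nonneg_right _ hε.le
        exact_mod_cast hk1
      linarith
    have h0 := maximal_erg hf hfν hmeas (|ε| + C) hbound hae
    have hgint : Integrable g ν := integrable_of_bound hg C hC
    rw [integral_sub (integrable_const ε) hgint, integral_const] at h0
    simp only [probReal_univ, measure_univ, ENNReal.toReal_one, one_smul, smul_eq_mul, one_mul] at h0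
    linarith
  by_contra h
  push_neg at h
  have := key ((∫ x, g x ∂ν) / 2) (by linarith)
  linarith

theorem atkinson [IsProbabilityMeasure ν] (hf : Measurable f)
    (hfν : Measure.map f ν = ν) {g : α → ℝ} (hg : Measurable g) (C : ℝ)
    (hC : ∀ x, |g x| ≤ C)
    (hrec : ∀ᵐ x ∂ν, ∃ M : ℝ, ∀ K : ℕ, ∃ k, K ≤ k ∧ |bS f g k x| ≤ M) :
    ∫ x, g x ∂ν = 0 := by
  have h1 := atkinson_nonpos hf hfν hg C hC hrec
  have h2 : ∫ x, -g x ∂ν ≤ 0 := by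
    apply atkinson_nonpos hf hfν hg.neg C (fun x => by simpa using hC x)
    filter_upwards [hrec] with x ⟨M, hM⟩
    refine ⟨M, fun K => ?_⟩
    obtain ⟨k, hk1, hk2⟩ := hM K
    refine ⟨k, hk1, ?_⟩
    rw [show bS f (-g) k x = bS f (fun y => -g y) k x from rfl, bS_neg]
    simpa using hk2
  rw [integral_neg] at h2
  linarith

end AtkinsonAux


section FreqAux
set_option linter.unusedSectionVars false

open AtkinsonAux

/-- Key frequency lemma: applied to each coordinate. -/
theorem PieceExchange.freq_aux {T : ℝ × ℝ → ℝ × ℝ} {m : ℕ}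
    (E : PieceExchange T m) (t : ℝ) (w : Fin m → ℝ) (φ : ℝ × ℝ → ℝ)
    (hstep : ∀ y ∈ ⋃ i, E.D i, φ (E.R y) = φ y + (t - w (E.C y 0)))
    (hφ : ∀ y : ℝ × ℝ, |φ y| ≤ max |y.1| |y.2|) :
    t = ∑ i : Fin m, w i * (volume (E.D i)).toReal := by
  classical
  set D : Set (ℝ × ℝ) := ⋃ i, E.D i with hDdef
  have hD : MeasurableSet D := MeasurableSet.iUnion fun i => E.measD i
  set ν : Measure (ℝ × ℝ) := volume.restrict D with hνdef
  have hprob : IsProbabilityMeasure ν :=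
    ⟨by rw [hνdef, Measure.restrict_apply_univ]; exact E.measure_union⟩
  -- R is measure preserving for ν
  have hmap : Measure.map E.R ν = ν := by
    ext A hA
    rw [Measure.map_apply E.measR hA, hνdef, Measure.restrict_apply hA,
      Measure.restrict_apply (E.measR hA), Set.inter_comm A D, Set.inter_comm _ D]
    exact E.meas_pres A hA
  -- the coding function and the displacement cocycle
  set c : ℝ × ℝ → Fin m := fun x => E.C x 0 with hcdef
  have hc : Measurable c := (measurable_pi_apply 0).comp E.measC
  set g : ℝ × ℝ → ℝ := fun x => t - w (c x) with hgdef
  have hg : Measurable g :=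
    measurable_const.sub ((measurable_of_countable w).comp hc)
  set C : ℝ := |t| + ∑ i : Fin m, |w i| with hCdef
  have hgC : ∀ x, |g x| ≤ C := by
    intro x
    refine (abs_sub _ _).trans (add_le_add le_rfl ?_)
    exact Finset.single_le_sum (f := fun i => |w i|) (fun i _ => abs_nonneg _)
      (Finset.mem_univ (c x))
  -- points of D stay in D under iteration
  have hiter : ∀ x ∈ D, ∀ k : ℕ, E.R^[k] x ∈ D := fun x hx k =>
    Set.mem_iUnion.mpr ⟨E.C x k, E.mem_code x hx k⟩
  -- the Birkhoff sums of g compute the displacement of φ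
  have hbs : ∀ x ∈ D, ∀ k : ℕ, bS E.R g k x = φ (E.R^[k] x) - φ x := by
    intro x hx k
    induction k with
    | zero => simp [bS]
    | succ k ih =>
        rw [bS_succ, ih, Function.iterate_succ_apply',
          hstep (E.R^[k] x) (hiter x hx k)]
        ring
  -- recurrence of the Birkhoff sums, from the Poincaré recurrence theorem
  have hcons : Conservative E.R ν :=
    MeasurePreserving.conservative ⟨E.measR, hmap⟩
  set Q : ℕ → Set (ℝ × ℝ) := fun N => {y | max |y.1| |y.2| ≤ N} with hQdef
  have hQmeas : ∀ N, MeasurableSet (Q N) :=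
    fun N => measurableSet_le
      ((measurable_fst.abs).max (measurable_snd.abs)) measurable_const
  have hrec : ∀ᵐ x ∂ν, ∃ M : ℝ, ∀ K : ℕ, ∃ k, K ≤ k ∧ |bS E.R g k x| ≤ M := by
    have h1 : ∀ᵐ x ∂ν, ∀ N : ℕ, x ∈ Q N → ∃ᶠ n in Filter.atTop, E.R^[n] x ∈ Q N :=
      ae_all_iff.mpr fun N =>
        hcons.ae_mem_imp_frequently_image_mem (hQmeas N).nullMeasurableSet
    have h2 : ∀ᵐ x ∂ν, x ∈ D := ae_restrict_mem hD
    filter_upwards [h1, h2] with x hx1 hx2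
    obtain ⟨N, hN⟩ := exists_nat_ge (max |x.1| |x.2|)
    refine ⟨2 * N, fun K => ?_⟩
    obtain ⟨k, hk1, hk2⟩ := Filter.frequently_atTop.mp (hx1 N hN) K
    refine ⟨k, hk1, ?_⟩
    rw [hbs x hx2 k]
    have hb1 : |φ (E.R^[k] x)| ≤ N := (hφ _).trans hk2
    have hb2 : |φ x| ≤ N := (hφ x).trans hN
    calc |φ (E.R^[k] x) - φ x| ≤ |φ (E.R^[k] x)| + |φ x| := abs_sub _ _
      _ ≤ 2 * N := by linarith
  -- Atkinson's lemma: the mean of g vanishes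
  have hzero : ∫ x, g x ∂ν = 0 := atkinson E.measR hmap hg C hgC hrec
  -- compute the integral of g
  have hgint : Integrable g ν := integrable_of_bound hg C hgC
  have hpt : ∀ x, w (c x) = ∑ i : Fin m, (c ⁻¹' {i}).indicator (fun _ => w i) x := by
    intro x
    rw [Finset.sum_eq_single (c x)]
    · simp [Set.indicator_apply]
    · intro i _ hi
      simp [Set.indicator_apply, Ne.symm hi]
    · simp
  have hwcint : ∀ i : Fin m, Integrable ((c ⁻¹' {i}).indicator fun _ => w i) ν :=
    fun i => (integrable_const (w i)).indicator (hc (measurableSet_singleton i))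
  have hint2 : ∫ x, w (c x) ∂ν = ∑ i : Fin m, w i * (ν (c ⁻¹' {i})).toReal := by
    rw [integral_congr_ae (ae_of_all _ hpt), integral_finset_sum _ fun i _ => hwcint i]
    refine Finset.sum_congr rfl fun i _ => ?_
    rw [integral_indicator_const (w i) (hc (measurableSet_singleton i)), smul_eq_mul,
      mul_comm]
    rfl
  -- each ν (c ⁻¹' {i}) equals the measure of the piece
  have hpiece : ∀ i : Fin m, ν (c ⁻¹' {i}) = volume (E.D i) := by
    intro i
    rw [hνdef, Measure.restrict_apply (hc (measurableSet_singleton i))]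
    set A : Set (ℝ × ℝ) := c ⁻¹' {i} ∩ D with hAdef
    have hsub : A ⊆ E.D i := by
      rintro x ⟨hx1, hx2⟩
      have := E.mem_code x hx2 0
      simp only [Function.iterate_zero_apply] at this
      have hcx : c x = i := hx1
      rw [← hcx]
      exact this
    have hdiffnull : volume (E.D i \ A) = 0 := by
      have hsub2 : E.D i \ A ⊆ ⋃ j, (if j = i then (∅ : Set (ℝ × ℝ)) else E.D i ∩ E.D j) := by
        rintro x ⟨hx1, hx2⟩
        have hxD : x ∈ D := Set.mem_iUnion.mpr ⟨i, hx1⟩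
        have hxc : x ∈ E.D (c x) := by
          have := E.mem_code x hxD 0
          simpa using this
        have hne : c x ≠ i := by
          intro h
          exact hx2 ⟨by simpa [h] using Set.mem_singleton i, hxD⟩
        refine Set.mem_iUnion.mpr ⟨c x, ?_⟩
        rw [if_neg hne]
        exact ⟨hx1, hxc⟩
      refine measure_mono_null hsub2 (measure_iUnion_null fun j => ?_)
      by_cases hj : j = i
      · simp [hj]
      · rw [if_neg hj]
        exact E.aeDisjoint i j fun h => hj h.symm
    have h1 : volume (E.D i) ≤ volume A := by
      calc volume (E.D i) = volume (A ∪ E.D i \ A) := by rw [Set.union_diff_cancel hsub]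
        _ ≤ volume A + volume (E.D i \ A) := measure_union_le _ _
        _ = volume A := by rw [hdiffnull, add_zero]
    exact le_antisymm (measure_mono hsub) h1
  -- put everything together
  have hconst : ∫ _x, t ∂ν = t := by
    rw [integral_const]
    simp [measure_univ]
  have : ∫ x, g x ∂ν = t - ∑ i : Fin m, w i * (volume (E.D i)).toReal := by
    rw [hgdef]
    rw [integral_sub (integrable_const t) (by
      have : (fun x => w (c x)) = fun x => t - g x := by
        funext x; simp [hgdef]
      rw [show (fun x => w (c x)) = fun x => t - g x from this]
      exact (integrable_const t).sub hgint)]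
    rw [hconst, hint2]
    congr 1
    exact Finset.sum_congr rfl fun i _ => by rw [hpiece i]
  rw [this] at hzero
  linarith

end FreqAux

/-- Let `T (x,y) = (x+r, y+s)` be a plane translation inducing an ergodic
torus rotation, and let `E` be an exchange of `m` pieces adapted to `T` with translation
vectors `(n_i, m_i)` and piece measures `α_i`, whose generated system is measure-equivalent to
the torus rotation.  Then `r = Σ n_i α_i` and `s = Σ m_i α_i`. -/
theorem translation_vector_from_frequencies (r s : ℝ)
    (hirr : ∀ p q : ℤ, (p, q) ≠ (0, 0) → ∀ k : ℤ, (p : ℝ) * r + (q : ℝ) * s ≠ (k : ℝ))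
    (m : ℕ) (E : PieceExchange (fun x : ℝ × ℝ => (x.1 + r, x.2 + s)) m)
    (hconj : E.Conjugate) :
    r = ∑ i : Fin m, ((E.vec i).1 : ℝ) * (volume (E.D i)).toReal ∧
    s = ∑ i : Fin m, ((E.vec i).2 : ℝ) * (volume (E.D i)).toReal := by
  have hR : ∀ y ∈ ⋃ i, E.D i,
      E.R y = (y.1 + r, y.2 + s) - latVec (E.vec (E.C y 0)) := by
    intro y hy
    have := E.R_eq y hy 0
    simpa using this
  constructor
  · refine E.freq_aux r (fun i => ((E.vec i).1 : ℝ)) Prod.fst ?_ ?_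
    · intro y hy
      rw [hR y hy]
      simp [latVec]
      ring
    · intro y
      exact le_max_left _ _
  · refine E.freq_aux s (fun i => ((E.vec i).2 : ℝ)) Prod.snd ?_ ?_
    · intro y hy
      rw [hR y hy]
      simp [latVec]
      ring
    · intro y
      exact le_max_right _ _

end
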